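/- Let n ≥ 3 and λ = (λ_1, …, λ_n) ∈ ℝ^n. Then every vertex (extreme point) x of the tweaked Gelfand–Tsetlin polytope tGT(λ) has all of its coordinates in the additive subgroup ℤλ_1 + ℤλ_2 + … + ℤλ_n of ℝ generated by λ_1, …, λ_n. -/

import Mathlib

/-- Index set for the `y`-entries: pairs `(i, j)` with `2 ≤ i ≤ j ≤ n`. -/
abbrev DYIdx (n : ℕ) := {p : ℕ × ℕ // 2 ≤ p.1 ∧ p.1 ≤ p.2 ∧ p.2 ≤ n}

/-- Index set for the `z`-entries with `1 ≤ i ≤ j ≤ n − 2`. -/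
abbrev DZIdx (n : ℕ) := {p : ℕ × ℕ // 1 ≤ p.1 ∧ p.1 ≤ p.2 ∧ p.2 ≤ n - 2}

/-- Index set for the `z↑`- and `z↓`-entries: `1 ≤ i ≤ n − 2`. -/
abbrev DUIdx (n : ℕ) := {i : ℕ // 1 ≤ i ∧ i ≤ n - 2}

/-- The ambient space `ℝ^{n²−2}` of tweaked Gelfand–Tsetlin patterns: coordinates
`y_{i,j}` (for `2 ≤ i ≤ j ≤ n`), `z_{i,j}` (for `1 ≤ i ≤ j ≤ n−2`), `z↑_{i,n−1}` and
`z↓_{i,n−1}` (for `1 ≤ i ≤ n−2`), and `z_{n−1,n−1}`. -/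
abbrev TPt (n : ℕ) := (DYIdx n → ℝ) × (DZIdx n → ℝ) × (DUIdx n → ℝ) × (DUIdx n → ℝ) × ℝ

/-- The `y_{i,j}` coordinate, with the convention `y_{1,j} = λ_j`
(`0` for out-of-range indices). -/
def tY (n : ℕ) (lam : ℕ → ℝ) (w : TPt n) (i j : ℕ) : ℝ :=
  if i = 1 ∧ 1 ≤ j ∧ j ≤ n then lam j
  else if h : 2 ≤ i ∧ i ≤ j ∧ j ≤ n then w.1 ⟨(i, j), h⟩ else 0

/-- The `z_{i,j}` coordinate, `1 ≤ i ≤ j ≤ n−2` (`0` for out-of-range indices). -/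
def tZ (n : ℕ) (w : TPt n) (i j : ℕ) : ℝ :=
  if h : 1 ≤ i ∧ i ≤ j ∧ j ≤ n - 2 then w.2.1 ⟨(i, j), h⟩ else 0

/-- The `z↑_{i,n−1}` coordinate (`0` for out-of-range indices). -/
def tU (n : ℕ) (w : TPt n) (i : ℕ) : ℝ :=
  if h : 1 ≤ i ∧ i ≤ n - 2 then w.2.2.1 ⟨i, h⟩ else 0

/-- The `z↓_{i,n−1}` coordinate (`0` for out-of-range indices). -/
def tD (n : ℕ) (w : TPt n) (i : ℕ) : ℝ :=
  if h : 1 ≤ i ∧ i ≤ n - 2 then w.2.2.2.1 ⟨i, h⟩ else 0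

/-- The `z_{n−1,n−1}` coordinate. -/
def tL (n : ℕ) (w : TPt n) : ℝ := w.2.2.2.2

/-- The affine subspace `V_λ ⊆ ℝ^{n²−2}` defined by
`z↑_{i,n−1} − z↓_{i,n−1} = y_{i,n−1} − y_{i+1,n−1}` for `1 ≤ i ≤ n−2`. -/
def Vlam (n : ℕ) (lam : ℕ → ℝ) : Set (TPt n) :=
  {w | ∀ i, 1 ≤ i → i ≤ n - 2 →
    tU n w i - tD n w i = tY n lam w i (n - 1) - tY n lam w (i + 1) (n - 1)}

/-- The tweaked Gelfand–Tsetlin polytope `tGT(λ)` in type `Dₙ`. -/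
def tGT (n : ℕ) (lam : ℕ → ℝ) : Set (TPt n) :=
  {w | w ∈ Vlam n lam ∧
    (∀ i j, 1 ≤ i → i ≤ n - 2 → i ≤ j → j ≤ n - 2 →
      tY n lam w i j ≥ tZ n w i j ∧ tZ n w i j ≥ tY n lam w i (j + 1)) ∧
    (∀ i j, 1 ≤ i → i ≤ n - 2 → i + 1 ≤ j → j ≤ n - 2 →
      tZ n w i (j - 1) ≥ tY n lam w (i + 1) j ∧ tY n lam w (i + 1) j ≥ tZ n w i j) ∧
    (∀ i, 1 ≤ i → i ≤ n - 2 → tZ n w i (n - 2) ≥ tY n lam w (i + 1) (n - 1)) ∧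
    (∀ i, 1 ≤ i → i ≤ n - 2 →
      tY n lam w i (n - 1) ≥ tU n w i ∧
      tU n w i ≥ max (tY n lam w i n) (tY n lam w (i + 1) n) ∧
      tU n w i ≤ tY n lam w i (n - 1) + tY n lam w i n + tY n lam w (i + 1) n ∧
      tY n lam w (i + 1) (n - 1) ≥ tD n w i ∧
      tD n w i ≥ max (tY n lam w i n) (tY n lam w (i + 1) n) ∧
      tD n w i ≤ tY n lam w (i + 1) (n - 1) + tY n lam w i n + tY n lam w (i + 1) n) ∧
    (tY n lam w (n - 1) (n - 1) ≥ tL n w ∧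
      tL n w ≥ max (tY n lam w (n - 1) n) (tY n lam w n n) ∧
      tL n w ≤ tY n lam w (n - 1) (n - 1) + tY n lam w (n - 1) n + tY n lam w n n)}

open scoped Classical

noncomputable section
namespace TGTaux

variable (G : AddSubgroup ℝ)

/-- perturbation direction of a single value -/
noncomputable def dir (v : ℝ) : ℝ :=
  if v ∈ G then 0 else if 0 ≤ v then 1 else -1

lemma dir_of_mem {v : ℝ} (h : v ∈ G) : dir G v = 0 := by simp [dir, h]

lemma mem_of_dir_eq_zero {v : ℝ} (h : dir G v = 0) : v ∈ G := by
  by_contra hv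
  simp only [dir, if_neg hv] at h
  split_ifs at h <;> norm_num at h

lemma abs_dir_le (v : ℝ) : |dir G v| ≤ 1 := by
  unfold dir; split_ifs <;> simp

lemma dir_neg {a b : ℝ} (h : b = -a) : dir G b = -dir G a := by
  subst h
  by_cases ha : a ∈ G
  · rw [dir_of_mem G ha, dir_of_mem G (neg_mem ha), neg_zero]
  · have ha0 : a ≠ 0 := by rintro rfl; exact ha (zero_mem G)
    have hb : -a ∉ G := fun h => ha (by simpa using neg_mem h)
    unfold dir
    rw [if_neg ha, if_neg hb]
    rcases lt_or_gt_of_ne ha0 with h1 | h1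
    · rw [if_pos (by linarith : (0:ℝ) ≤ -a), if_neg (by linarith : ¬ (0:ℝ) ≤ a)]
      norm_num
    · rw [if_neg (by simp only [Left.nonneg_neg_iff, not_le]; linarith : ¬ (0:ℝ) ≤ -a),
        if_pos (by linarith : (0:ℝ) ≤ a)]

/-- preservation of a 2-variable inequality under perturbation. -/
lemma edge_pres {v w dv dw : ℝ} (hvw : v ≤ w)
    (hdv : |dv| ≤ 1) (hdw : |dw| ≤ 1) (htight : v = w → dv = dw) :
    ∃ ε > 0, ∀ t : ℝ, |t| ≤ ε → v + t * dv ≤ w + t * dw := by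
  rcases eq_or_lt_of_le hvw with h | h
  · exact ⟨1, one_pos, fun t _ => by rw [h, htight h]⟩
  · refine ⟨(w - v) / 4, by linarith, fun t ht => ?_⟩
    have h1 : t * dv ≤ |t| := by
      calc t * dv ≤ |t * dv| := le_abs_self _
      _ = |t| * |dv| := abs_mul t dv
      _ ≤ |t| * 1 := by nlinarith [abs_nonneg t]
      _ = |t| := mul_one _
    have h2 : -(t * dw) ≤ |t| := by
      calc -(t * dw) ≤ |t * dw| := neg_le_abs _
      _ = |t| * |dw| := abs_mul t dw
      _ ≤ |t| := by nlinarith [abs_nonneg t]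
    linarith

/-- combine epsilon statements over a finite set -/
lemma eps_combine {ι : Type*} (s : Finset ι) (P : ι → ℝ → Prop)
    (h : ∀ i ∈ s, ∃ ε > 0, ∀ t : ℝ, |t| ≤ ε → P i t) :
    ∃ ε > 0, ∀ t : ℝ, |t| ≤ ε → ∀ i ∈ s, P i t := by
  classical
  induction s using Finset.induction with
  | empty => exact ⟨1, one_pos, fun t _ i hi => absurd hi (Finset.notMem_empty i)⟩
  | @insert a s' hnotmem ih =>
    obtain ⟨ε1, hε1, h1⟩ := h a (Finset.mem_insert_self a s')
    obtain ⟨ε2, hε2, h2⟩ := ih (fun i hi => h i (Finset.mem_insert_of_mem hi))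
    refine ⟨min ε1 ε2, lt_min hε1 hε2, fun t ht i hi => ?_⟩
    rcases Finset.mem_insert.1 hi with rfl | hi
    · exact h1 t (le_trans ht (min_le_left _ _))
    · exact h2 t (le_trans ht (min_le_right _ _)) i hi

lemma eps_and {P Q : ℝ → Prop}
    (hP : ∃ ε > 0, ∀ t : ℝ, |t| ≤ ε → P t) (hQ : ∃ ε > 0, ∀ t : ℝ, |t| ≤ ε → Q t) :
    ∃ ε > 0, ∀ t : ℝ, |t| ≤ ε → P t ∧ Q t := by
  obtain ⟨e1, he1, h1⟩ := hP
  obtain ⟨e2, he2, h2⟩ := hQ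
  exact ⟨min e1 e2, lt_min he1 he2, fun t ht =>
    ⟨h1 t (le_trans ht (min_le_left _ _)), h2 t (le_trans ht (min_le_right _ _))⟩⟩

/-- the perturbation delta assigned to the active junction variable -/
noncomputable def dwJ (w a b : ℝ) : ℝ :=
  if 0 ≤ a + b then dir G w else dir G (w - a - b) + dir G a + dir G b

/-- Main generic junction-preservation lemma. -/
lemma junction_pres {w p a b : ℝ}
    (ha : a ≤ w) (hb : b ≤ w) (hp : w ≤ p) (hs : w ≤ p + a + b) :
    ∃ ε > 0, ∀ t : ℝ, |t| ≤ ε →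
      (a + t * dir G a ≤ w + t * dwJ G w a b ∧
       b + t * dir G b ≤ w + t * dwJ G w a b ∧
       w + t * dwJ G w a b ≤ p + t * dir G p ∧
       w + t * dwJ G w a b ≤ (p + t * dir G p) + (a + t * dir G a) + (b + t * dir G b)) := by
  by_cases hσ : 0 ≤ a + b
  · -- σ+ : dwJ = dir w
    have hdw : dwJ G w a b = dir G w := if_pos hσ
    rw [hdw]
    refine eps_and ?_ (eps_and ?_ (eps_and ?_ ?_))
    · exact edge_pres ha (abs_dir_le G a) (abs_dir_le G w) (fun h => by rw [h])
    · exact edge_pres hb (abs_dir_le G b) (abs_dir_le G w) (fun h => by rw [h])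
    · exact edge_pres hp (abs_dir_le G w) (abs_dir_le G p) (fun h => by rw [h])
    · -- sum row, σ+
      rcases eq_or_lt_of_le hs with h | h
      · -- tight : then a + b = 0 and w = p
        have hab : a + b = 0 := le_antisymm (by linarith) hσ
        have hwp : w = p := by linarith
        have h1 : dir G w = dir G p := by rw [hwp]
        have h2 : dir G b = - dir G a := dir_neg G (by linarith)
        refine ⟨1, one_pos, fun t _ => ?_⟩
        have : w + t * dir G w = p + a + b + (t * dir G p + t * dir G a + t * dir G b) := by
          rw [h1, h2]; ring_nf; linarith [hwp, hab]
        linarith [this]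
      · -- slack
        refine ⟨(p + a + b - w) / 8, by linarith, fun t ht => ?_⟩
        have b1 : t * dir G w ≤ |t| := by
          calc t * dir G w ≤ |t * dir G w| := le_abs_self _
          _ = |t| * |dir G w| := abs_mul _ _
          _ ≤ |t| := by nlinarith [abs_nonneg t, abs_dir_le G w]
        have b2 : -(t * dir G p) ≤ |t| := by
          calc -(t * dir G p) ≤ |t * dir G p| := neg_le_abs _
          _ = |t| * |dir G p| := abs_mul _ _
          _ ≤ |t| := by nlinarith [abs_nonneg t, abs_dir_le G p]
        have b3 : -(t * dir G a) ≤ |t| := by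
          calc -(t * dir G a) ≤ |t * dir G a| := neg_le_abs _
          _ = |t| * |dir G a| := abs_mul _ _
          _ ≤ |t| := by nlinarith [abs_nonneg t, abs_dir_le G a]
        have b4 : -(t * dir G b) ≤ |t| := by
          calc -(t * dir G b) ≤ |t * dir G b| := neg_le_abs _
          _ = |t| * |dir G b| := abs_mul _ _
          _ ≤ |t| := by nlinarith [abs_nonneg t, abs_dir_le G b]
        linarith
  · -- σ− : dwJ = dir W + dir a + dir b  with W = w - a - b
    have hσ' : a + b < 0 := not_le.1 hσ
    set W := w - a - b with hW
    have hdw : dwJ G w a b = dir G W + dir G a + dir G b := if_neg hσ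
    rw [hdw]
    have habs : ∀ t : ℝ, ∀ v : ℝ, t * dir G v ≤ |t| ∧ -(t * dir G v) ≤ |t| := by
      intro t v
      constructor
      · calc t * dir G v ≤ |t * dir G v| := le_abs_self _
          _ = |t| * |dir G v| := abs_mul _ _
          _ ≤ |t| := by nlinarith [abs_nonneg t, abs_dir_le G v]
      · calc -(t * dir G v) ≤ |t * dir G v| := neg_le_abs _
          _ = |t| * |dir G v| := abs_mul _ _
          _ ≤ |t| := by nlinarith [abs_nonneg t, abs_dir_le G v]
    refine eps_and ?_ (eps_and ?_ (eps_and ?_ ?_))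
    · -- a ≤ w  ⟺  -b ≤ W
      rcases eq_or_lt_of_le ha with h | h
      · -- tight: W = -b
        have hWb : W = -b := by rw [hW]; linarith
        have h2 : dir G W = - dir G b := dir_neg G hWb
        refine ⟨1, one_pos, fun t _ => ?_⟩
        rw [h2, ← h]
        have he : a + t * (-dir G b + dir G a + dir G b) = a + t * dir G a := by ring
        rw [he]
      · refine ⟨(w - a) / 8, by linarith, fun t ht => ?_⟩
        obtain ⟨c1, -⟩ := habs t a
        obtain ⟨-, c2⟩ := habs t W
        obtain ⟨-, c3⟩ := habs t a
        obtain ⟨-, c4⟩ := habs t b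
        linarith
    · -- b ≤ w ⟺ -a ≤ W
      rcases eq_or_lt_of_le hb with h | h
      · have hWa : W = -a := by rw [hW]; linarith
        have h2 : dir G W = - dir G a := dir_neg G hWa
        refine ⟨1, one_pos, fun t _ => ?_⟩
        rw [h2, ← h]
        have he : b + t * (-dir G a + dir G a + dir G b) = b + t * dir G b := by ring
        rw [he]
      · refine ⟨(w - b) / 8, by linarith, fun t ht => ?_⟩
        obtain ⟨c1, -⟩ := habs t b
        obtain ⟨-, c2⟩ := habs t W
        obtain ⟨-, c3⟩ := habs t a
        obtain ⟨-, c4⟩ := habs t b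
        linarith
    · -- w ≤ p : always slack in σ−
      refine ⟨(-(a+b)) / 8, by linarith, fun t ht => ?_⟩
      obtain ⟨c1, -⟩ := habs t W
      obtain ⟨c2, -⟩ := habs t a
      obtain ⟨c3, -⟩ := habs t b
      obtain ⟨-, c4⟩ := habs t p
      have hwp' : w ≤ p + a + b := hs
      linarith
    · -- sum row ⟺ W ≤ p
      have hWp : W ≤ p := by rw [hW]; linarith
      rcases eq_or_lt_of_le hWp with h | h
      · have h2 : dir G W = dir G p := by rw [h]
        refine ⟨1, one_pos, fun t _ => ?_⟩
        have he : w + t * (dir G W + dir G a + dir G b) =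
            (W + t * dir G W) + (a + t * dir G a) + (b + t * dir G b) := by
          rw [hW]; ring
        rw [he, h2, h]
      · refine ⟨(p - W) / 8, by linarith, fun t ht => ?_⟩
        obtain ⟨c1, -⟩ := habs t W
        obtain ⟨-, c2⟩ := habs t p
        have he : w + t * (dir G W + dir G a + dir G b) =
            (W + t * dir G W) + (a + t * dir G a) + (b + t * dir G b) := by
          rw [hW]; ring
        linarith [he.le, he.ge]

/-- if the active delta vanishes along with the neighbours', the active value is in G -/
lemma junction_zero {w a b : ℝ}
    (hdw : dwJ G w a b = 0) (hda : dir G a = 0) (hdb : dir G b = 0) : w ∈ G := by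
  unfold dwJ at hdw
  split_ifs at hdw
  · exact mem_of_dir_eq_zero G hdw
  · rw [hda, hdb, add_zero, add_zero] at hdw
    have h1 : w - a - b ∈ G := mem_of_dir_eq_zero G hdw
    have h2 : a ∈ G := mem_of_dir_eq_zero G hda
    have h3 : b ∈ G := mem_of_dir_eq_zero G hdb
    have : w = (w - a - b) + a + b := by ring
    rw [this]
    exact add_mem (add_mem h1 h2) h3

end TGTaux
end


noncomputable section
namespace TGTmain
open TGTaux

variable (n : ℕ) (lam : ℕ → ℝ) (x : TPt n)

/-- the subgroup generated by the λ's -/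
abbrev G0 : AddSubgroup ℝ := AddSubgroup.closure (lam '' Set.Icc 1 n)

lemma lam_mem {j : ℕ} (h1 : 1 ≤ j) (h2 : j ≤ n) : lam j ∈ G0 n lam :=
  AddSubgroup.subset_closure ⟨j, ⟨h1, h2⟩, rfl⟩

/- ---- linearity of the accessor maps ---- -/

lemma tY_lin (d : TPt n) (t : ℝ) (i j : ℕ) :
    tY n lam (x + t • d) i j = tY n lam x i j + t * tY n (fun _ => 0) d i j := by
  simp only [tY]
  by_cases h1 : i = 1 ∧ 1 ≤ j ∧ j ≤ n
  · rw [if_pos h1, if_pos h1, if_pos h1]; ring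
  · rw [if_neg h1, if_neg h1, if_neg h1]
    by_cases h2 : 2 ≤ i ∧ i ≤ j ∧ j ≤ n
    · rw [dif_pos h2, dif_pos h2, dif_pos h2]
      show (x.1 + (t • d).1) _ = _
      simp [Prod.smul_fst, smul_eq_mul]
    · rw [dif_neg h2, dif_neg h2, dif_neg h2]; ring

lemma tZ_lin (d : TPt n) (t : ℝ) (i j : ℕ) :
    tZ n (x + t • d) i j = tZ n x i j + t * tZ n d i j := by
  simp only [tZ]
  by_cases h : 1 ≤ i ∧ i ≤ j ∧ j ≤ n - 2
  · rw [dif_pos h, dif_pos h, dif_pos h]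
    show (x.2.1 + (t • d).2.1) _ = _
    simp [smul_eq_mul]
  · rw [dif_neg h, dif_neg h, dif_neg h]; ring

lemma tU_lin (d : TPt n) (t : ℝ) (i : ℕ) :
    tU n (x + t • d) i = tU n x i + t * tU n d i := by
  simp only [tU]
  by_cases h : 1 ≤ i ∧ i ≤ n - 2
  · rw [dif_pos h, dif_pos h, dif_pos h]
    show (x.2.2.1 + (t • d).2.2.1) _ = _
    simp [smul_eq_mul]
  · rw [dif_neg h, dif_neg h, dif_neg h]; ring

lemma tD_lin (d : TPt n) (t : ℝ) (i : ℕ) :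
    tD n (x + t • d) i = tD n x i + t * tD n d i := by
  simp only [tD]
  by_cases h : 1 ≤ i ∧ i ≤ n - 2
  · rw [dif_pos h, dif_pos h, dif_pos h]
    show (x.2.2.2.1 + (t • d).2.2.2.1) _ = _
    simp [smul_eq_mul]
  · rw [dif_neg h, dif_neg h, dif_neg h]; ring

lemma tL_lin (d : TPt n) (t : ℝ) :
    tL n (x + t • d) = tL n x + t * tL n d := by
  show (x.2.2.2.2 + (t • d).2.2.2.2) = _
  simp [tL, smul_eq_mul]

/- ---- the perturbation direction ---- -/

/-- whether the lower (`z↓`) entry is the active one at junction `i` -/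
def ActD (i : ℕ) : Prop := tY n lam x (i+1) (n-1) ≤ tY n lam x i (n-1)

/-- delta of the active junction variable -/
def DW (i : ℕ) : ℝ :=
  if ActD n lam x i then dwJ (G0 n lam) (tD n x i) (tY n lam x i n) (tY n lam x (i+1) n)
  else dwJ (G0 n lam) (tU n x i) (tY n lam x i n) (tY n lam x (i+1) n)

def DUv (i : ℕ) : ℝ :=
  if ActD n lam x i then
    DW n lam x i + dir (G0 n lam) (tY n lam x i (n-1)) - dir (G0 n lam) (tY n lam x (i+1) (n-1))
  else DW n lam x i

def DDv (i : ℕ) : ℝ :=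
  if ActD n lam x i then DW n lam x i
  else DW n lam x i - dir (G0 n lam) (tY n lam x i (n-1)) + dir (G0 n lam) (tY n lam x (i+1) (n-1))

/-- the perturbation -/
def pert : TPt n :=
  (fun p => dir (G0 n lam) (tY n lam x p.1.1 p.1.2),
   fun p => dir (G0 n lam) (tZ n x p.1.1 p.1.2),
   fun i => DUv n lam x i.1,
   fun i => DDv n lam x i.1,
   dwJ (G0 n lam) (tL n x) (tY n lam x (n-1) n) (tY n lam x n n))

lemma pertY (i j : ℕ) :
    tY n (fun _ => 0) (pert n lam x) i j = dir (G0 n lam) (tY n lam x i j) := by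
  by_cases h1 : i = 1 ∧ 1 ≤ j ∧ j ≤ n
  · have l : tY n (fun _ => 0) (pert n lam x) i j = 0 := by
      simp only [tY]; rw [if_pos h1]
    have r : tY n lam x i j = lam j := by simp only [tY]; rw [if_pos h1]
    rw [l, r, dir_of_mem _ (lam_mem n lam h1.2.1 h1.2.2)]
  · by_cases h2 : 2 ≤ i ∧ i ≤ j ∧ j ≤ n
    · have l : tY n (fun _ => 0) (pert n lam x) i j = (pert n lam x).1 ⟨(i,j), h2⟩ := by
        simp only [tY]; rw [if_neg h1, dif_pos h2]
      have r : tY n lam x i j = x.1 ⟨(i,j), h2⟩ := by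
        simp only [tY]; rw [if_neg h1, dif_pos h2]
      rw [l]
      show dir (G0 n lam) (tY n lam x i j) = _
      rfl
    · have l : tY n (fun _ => 0) (pert n lam x) i j = 0 := by
        simp only [tY]; rw [if_neg h1, dif_neg h2]
      have r : tY n lam x i j = 0 := by simp only [tY]; rw [if_neg h1, dif_neg h2]
      rw [l, r, dir_of_mem _ (zero_mem _)]

lemma pertZ (i j : ℕ) :
    tZ n (pert n lam x) i j = dir (G0 n lam) (tZ n x i j) := by
  by_cases h : 1 ≤ i ∧ i ≤ j ∧ j ≤ n - 2
  · have l : tZ n (pert n lam x) i j = (pert n lam x).2.1 ⟨(i,j), h⟩ := by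
      simp only [tZ]; rw [dif_pos h]
    rw [l]; rfl
  · simp only [tZ]; rw [dif_neg h, dif_neg h, dir_of_mem _ (zero_mem _)]

lemma pertU {i : ℕ} (h : 1 ≤ i ∧ i ≤ n - 2) :
    tU n (pert n lam x) i = DUv n lam x i := by
  simp only [tU]; rw [dif_pos h]; rfl

lemma pertD {i : ℕ} (h : 1 ≤ i ∧ i ≤ n - 2) :
    tD n (pert n lam x) i = DDv n lam x i := by
  simp only [tD]; rw [dif_pos h]; rfl

lemma pertL :
    tL n (pert n lam x) = dwJ (G0 n lam) (tL n x) (tY n lam x (n-1) n) (tY n lam x n n) := rfl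

/- ---- expansion lemmas ---- -/

lemma expY (t : ℝ) (i j : ℕ) :
    tY n lam (x + t • pert n lam x) i j
      = tY n lam x i j + t * dir (G0 n lam) (tY n lam x i j) := by
  rw [tY_lin, pertY]

lemma expZ (t : ℝ) (i j : ℕ) :
    tZ n (x + t • pert n lam x) i j
      = tZ n x i j + t * dir (G0 n lam) (tZ n x i j) := by
  rw [tZ_lin, pertZ]

lemma expU (t : ℝ) {i : ℕ} (h : 1 ≤ i ∧ i ≤ n - 2) :
    tU n (x + t • pert n lam x) i = tU n x i + t * DUv n lam x i := by
  rw [tU_lin, pertU n lam x h]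

lemma expD (t : ℝ) {i : ℕ} (h : 1 ≤ i ∧ i ≤ n - 2) :
    tD n (x + t • pert n lam x) i = tD n x i + t * DDv n lam x i := by
  rw [tD_lin, pertD n lam x h]

lemma expL (t : ℝ) :
    tL n (x + t • pert n lam x)
      = tL n x + t * dwJ (G0 n lam) (tL n x) (tY n lam x (n-1) n) (tY n lam x n n) := by
  rw [tL_lin, pertL]

/- ---- preservation of the constraints ---- -/

lemma pert_Vlam (hx1 : x ∈ tGT n lam) (t : ℝ) :
    (x + t • pert n lam x) ∈ Vlam n lam := by
  intro i h1 h2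
  have hE := hx1.1 i h1 h2
  rw [expU n lam x t ⟨h1, h2⟩, expD n lam x t ⟨h1, h2⟩, expY, expY]
  simp only [DUv, DDv]
  split_ifs with h <;> linear_combination hE

lemma C2_block (hx1 : x ∈ tGT n lam) :
    ∃ ε > 0, ∀ t : ℝ, |t| ≤ ε → ∀ i j, 1 ≤ i → i ≤ n - 2 → i ≤ j → j ≤ n - 2 →
      tY n lam (x + t • pert n lam x) i j ≥ tZ n (x + t • pert n lam x) i j ∧
      tZ n (x + t • pert n lam x) i j ≥ tY n lam (x + t • pert n lam x) i (j + 1) := by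
  obtain ⟨ε, hε, H⟩ := eps_combine ((Finset.Icc 1 (n-2)) ×ˢ (Finset.Icc 1 (n-2)))
    (fun q t => q.1 ≤ q.2 →
      (tY n lam (x + t • pert n lam x) q.1 q.2 ≥ tZ n (x + t • pert n lam x) q.1 q.2 ∧
       tZ n (x + t • pert n lam x) q.1 q.2 ≥ tY n lam (x + t • pert n lam x) q.1 (q.2 + 1)))
    (by
      rintro ⟨i, j⟩ hq
      by_cases hij : i ≤ j
      · simp only [Finset.mem_product, Finset.mem_Icc] at hq
        obtain ⟨h1, h2⟩ := hx1.2.1 i j hq.1.1 hq.1.2 hij hq.2.2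
        have r1 := edge_pres (dv := dir (G0 n lam) (tZ n x i j))
          (dw := dir (G0 n lam) (tY n lam x i j)) h1 (abs_dir_le _ _) (abs_dir_le _ _)
          (fun h => by rw [h])
        have r2 := edge_pres (dv := dir (G0 n lam) (tY n lam x i (j+1)))
          (dw := dir (G0 n lam) (tZ n x i j)) h2 (abs_dir_le _ _) (abs_dir_le _ _)
          (fun h => by rw [h])
        obtain ⟨e, he, hh⟩ := eps_and r1 r2
        refine ⟨e, he, fun t ht _ => ?_⟩
        rw [expY, expY, expZ]
        exact (hh t ht)
      · exact ⟨1, one_pos, fun t _ h => absurd h hij⟩)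
  refine ⟨ε, hε, fun t ht i j h1 h2 h3 h4 => ?_⟩
  exact H t ht (i, j) (by simp only [Finset.mem_product, Finset.mem_Icc]; omega) h3

lemma C3_block (hx1 : x ∈ tGT n lam) :
    ∃ ε > 0, ∀ t : ℝ, |t| ≤ ε → ∀ i j, 1 ≤ i → i ≤ n - 2 → i + 1 ≤ j → j ≤ n - 2 →
      tZ n (x + t • pert n lam x) i (j - 1) ≥ tY n lam (x + t • pert n lam x) (i + 1) j ∧
      tY n lam (x + t • pert n lam x) (i + 1) j ≥ tZ n (x + t • pert n lam x) i j := by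
  obtain ⟨ε, hε, H⟩ := eps_combine ((Finset.Icc 1 (n-2)) ×ˢ (Finset.Icc 1 (n-2)))
    (fun q t => q.1 + 1 ≤ q.2 →
      (tZ n (x + t • pert n lam x) q.1 (q.2 - 1) ≥ tY n lam (x + t • pert n lam x) (q.1 + 1) q.2 ∧
       tY n lam (x + t • pert n lam x) (q.1 + 1) q.2 ≥ tZ n (x + t • pert n lam x) q.1 q.2))
    (by
      rintro ⟨i, j⟩ hq
      by_cases hij : i + 1 ≤ j
      · simp only [Finset.mem_product, Finset.mem_Icc] at hq
        obtain ⟨h1, h2⟩ := hx1.2.2.1 i j hq.1.1 hq.1.2 hij hq.2.2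
        have r1 := edge_pres (dv := dir (G0 n lam) (tY n lam x (i+1) j))
          (dw := dir (G0 n lam) (tZ n x i (j-1))) h1 (abs_dir_le _ _) (abs_dir_le _ _)
          (fun h => by rw [h])
        have r2 := edge_pres (dv := dir (G0 n lam) (tZ n x i j))
          (dw := dir (G0 n lam) (tY n lam x (i+1) j)) h2 (abs_dir_le _ _) (abs_dir_le _ _)
          (fun h => by rw [h])
        obtain ⟨e, he, hh⟩ := eps_and r1 r2
        refine ⟨e, he, fun t ht _ => ?_⟩
        rw [expY, expZ, expZ]
        exact hh t ht
      · exact ⟨1, one_pos, fun t _ h => absurd h hij⟩)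
  refine ⟨ε, hε, fun t ht i j h1 h2 h3 h4 => ?_⟩
  exact H t ht (i, j) (by simp only [Finset.mem_product, Finset.mem_Icc]; omega) h3

lemma C4_block (hx1 : x ∈ tGT n lam) :
    ∃ ε > 0, ∀ t : ℝ, |t| ≤ ε → ∀ i, 1 ≤ i → i ≤ n - 2 →
      tZ n (x + t • pert n lam x) i (n - 2) ≥ tY n lam (x + t • pert n lam x) (i + 1) (n - 1) := by
  obtain ⟨ε, hε, H⟩ := eps_combine (Finset.Icc 1 (n-2))
    (fun i t =>
      tZ n (x + t • pert n lam x) i (n - 2) ≥ tY n lam (x + t • pert n lam x) (i + 1) (n - 1))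
    (by
      intro i hq
      simp only [Finset.mem_Icc] at hq
      have h1 := hx1.2.2.2.1 i hq.1 hq.2
      have r1 := edge_pres (dv := dir (G0 n lam) (tY n lam x (i+1) (n-1)))
        (dw := dir (G0 n lam) (tZ n x i (n-2))) h1 (abs_dir_le _ _) (abs_dir_le _ _)
        (fun h => by rw [h])
      obtain ⟨e, he, hh⟩ := r1
      refine ⟨e, he, fun t ht => ?_⟩
      show tZ n (x + t • pert n lam x) i (n-2) ≥ tY n lam (x + t • pert n lam x) (i+1) (n-1)
      rw [expY, expZ]
      exact hh t ht)
  refine ⟨ε, hε, fun t ht i h1 h2 => H t ht i (by simp only [Finset.mem_Icc]; omega)⟩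

lemma junction_block (hx1 : x ∈ tGT n lam) {i : ℕ} (h1 : 1 ≤ i) (h2 : i ≤ n - 2) :
    ∃ ε > 0, ∀ t : ℝ, |t| ≤ ε →
      (tY n lam (x + t • pert n lam x) i (n - 1) ≥ tU n (x + t • pert n lam x) i ∧
       tU n (x + t • pert n lam x) i ≥
         max (tY n lam (x + t • pert n lam x) i n) (tY n lam (x + t • pert n lam x) (i + 1) n) ∧
       tU n (x + t • pert n lam x) i ≤
         tY n lam (x + t • pert n lam x) i (n - 1) + tY n lam (x + t • pert n lam x) i n +
           tY n lam (x + t • pert n lam x) (i + 1) n ∧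
       tY n lam (x + t • pert n lam x) (i + 1) (n - 1) ≥ tD n (x + t • pert n lam x) i ∧
       tD n (x + t • pert n lam x) i ≥
         max (tY n lam (x + t • pert n lam x) i n) (tY n lam (x + t • pert n lam x) (i + 1) n) ∧
       tD n (x + t • pert n lam x) i ≤
         tY n lam (x + t • pert n lam x) (i + 1) (n - 1) + tY n lam (x + t • pert n lam x) i n +
           tY n lam (x + t • pert n lam x) (i + 1) n) := by
  obtain ⟨hup, humax, husum, hdq, hdmax, hdsum⟩ := hx1.2.2.2.2.1 i h1 h2
  have hE := hx1.1 i h1 h2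
  obtain ⟨hua1, hua2⟩ := max_le_iff.1 humax
  obtain ⟨hda1, hda2⟩ := max_le_iff.1 hdmax
  by_cases hAct : ActD n lam x i
  · -- active variable is d
    have hreg0 : tY n lam x (i+1) (n-1) ≤ tY n lam x i (n-1) := hAct
    have hjp := junction_pres (G := G0 n lam) hda1 hda2 hdq hdsum
    have hreg := edge_pres (dv := dir (G0 n lam) (tY n lam x (i+1) (n-1)))
      (dw := dir (G0 n lam) (tY n lam x i (n-1))) hreg0 (abs_dir_le _ _) (abs_dir_le _ _)
      (fun h => by rw [h])
    obtain ⟨ε, hε, H⟩ := eps_and hjp hreg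
    refine ⟨ε, hε, fun t ht => ?_⟩
    obtain ⟨⟨r1, r2, r3, r4⟩, r5⟩ := H t ht
    rw [expU n lam x t ⟨h1, h2⟩, expD n lam x t ⟨h1, h2⟩]
    simp only [expY]
    simp only [DUv, DDv, DW, if_pos hAct]
    refine ⟨by linarith, max_le (by linarith) (by linarith), by linarith,
      by linarith, max_le (by linarith) (by linarith), by linarith⟩
  · -- active variable is u
    have hreg0 : tY n lam x i (n-1) ≤ tY n lam x (i+1) (n-1) := le_of_lt (not_le.1 hAct)
    have hjp := junction_pres (G := G0 n lam) hua1 hua2 hup husum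
    have hreg := edge_pres (dv := dir (G0 n lam) (tY n lam x i (n-1)))
      (dw := dir (G0 n lam) (tY n lam x (i+1) (n-1))) hreg0 (abs_dir_le _ _) (abs_dir_le _ _)
      (fun h => by rw [h])
    obtain ⟨ε, hε, H⟩ := eps_and hjp hreg
    refine ⟨ε, hε, fun t ht => ?_⟩
    obtain ⟨⟨r1, r2, r3, r4⟩, r5⟩ := H t ht
    rw [expU n lam x t ⟨h1, h2⟩, expD n lam x t ⟨h1, h2⟩]
    simp only [expY]
    simp only [DUv, DDv, DW, if_neg hAct]
    refine ⟨by linarith, max_le (by linarith) (by linarith), by linarith,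
      by linarith, max_le (by linarith) (by linarith), by linarith⟩

lemma L_block (hx1 : x ∈ tGT n lam) :
    ∃ ε > 0, ∀ t : ℝ, |t| ≤ ε →
      (tY n lam (x + t • pert n lam x) (n - 1) (n - 1) ≥ tL n (x + t • pert n lam x) ∧
       tL n (x + t • pert n lam x) ≥
         max (tY n lam (x + t • pert n lam x) (n - 1) n) (tY n lam (x + t • pert n lam x) n n) ∧
       tL n (x + t • pert n lam x) ≤
         tY n lam (x + t • pert n lam x) (n - 1) (n - 1) +
           tY n lam (x + t • pert n lam x) (n - 1) n + tY n lam (x + t • pert n lam x) n n) := by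
  obtain ⟨hLp, hLmax, hLsum⟩ := hx1.2.2.2.2.2
  obtain ⟨hLa, hLb⟩ := max_le_iff.1 hLmax
  have hjp := junction_pres (G := G0 n lam) hLa hLb hLp hLsum
  obtain ⟨ε, hε, H⟩ := hjp
  refine ⟨ε, hε, fun t ht => ?_⟩
  obtain ⟨r1, r2, r3, r4⟩ := H t ht
  rw [expL]
  simp only [expY]
  exact ⟨r3, max_le r1 r2, r4⟩

lemma feas (hx1 : x ∈ tGT n lam) :
    ∃ ε > 0, ∀ t : ℝ, |t| ≤ ε → (x + t • pert n lam x) ∈ tGT n lam := by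
  obtain ⟨e1, he1, H1⟩ := C2_block n lam x hx1
  obtain ⟨e2, he2, H2⟩ := C3_block n lam x hx1
  obtain ⟨e3, he3, H3⟩ := C4_block n lam x hx1
  obtain ⟨e4, he4, H4⟩ := eps_combine (Finset.Icc 1 (n-2))
    (fun i t =>
      (tY n lam (x + t • pert n lam x) i (n - 1) ≥ tU n (x + t • pert n lam x) i ∧
       tU n (x + t • pert n lam x) i ≥
         max (tY n lam (x + t • pert n lam x) i n) (tY n lam (x + t • pert n lam x) (i + 1) n) ∧
       tU n (x + t • pert n lam x) i ≤
         tY n lam (x + t • pert n lam x) i (n - 1) + tY n lam (x + t • pert n lam x) i n +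
           tY n lam (x + t • pert n lam x) (i + 1) n ∧
       tY n lam (x + t • pert n lam x) (i + 1) (n - 1) ≥ tD n (x + t • pert n lam x) i ∧
       tD n (x + t • pert n lam x) i ≥
         max (tY n lam (x + t • pert n lam x) i n) (tY n lam (x + t • pert n lam x) (i + 1) n) ∧
       tD n (x + t • pert n lam x) i ≤
         tY n lam (x + t • pert n lam x) (i + 1) (n - 1) + tY n lam (x + t • pert n lam x) i n +
           tY n lam (x + t • pert n lam x) (i + 1) n))
    (by
      intro i hq
      simp only [Finset.mem_Icc] at hq
      exact junction_block n lam x hx1 hq.1 hq.2)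
  obtain ⟨e5, he5, H5⟩ := L_block n lam x hx1
  refine ⟨min (min e1 e2) (min e3 (min e4 e5)),
    lt_min (lt_min he1 he2) (lt_min he3 (lt_min he4 he5)), fun t ht => ?_⟩
  have ht1 : |t| ≤ e1 := le_trans ht (le_trans (min_le_left _ _) (min_le_left _ _))
  have ht2 : |t| ≤ e2 := le_trans ht (le_trans (min_le_left _ _) (min_le_right _ _))
  have ht3 : |t| ≤ e3 := le_trans ht (le_trans (min_le_right _ _) (min_le_left _ _))
  have ht4 : |t| ≤ e4 :=
    le_trans ht (le_trans (min_le_right _ _) (le_trans (min_le_right _ _) (min_le_left _ _)))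
  have ht5 : |t| ≤ e5 :=
    le_trans ht (le_trans (min_le_right _ _) (le_trans (min_le_right _ _) (min_le_right _ _)))
  exact ⟨pert_Vlam n lam x hx1 t, H1 t ht1, H2 t ht2, H3 t ht3,
    fun i hi1 hi2 => H4 t ht4 i (by simp only [Finset.mem_Icc]; omega), H5 t ht5⟩


end TGTmain
end

/-- Every vertex of the tweaked Gelfand–Tsetlin polytope has all of its coordinates in
the additive subgroup of `ℝ` generated by `λ_1, …, λ_n`. -/
theorem statement10 (n : ℕ) (hn : 3 ≤ n) (lam : ℕ → ℝ)
    (x : TPt n) (hx : x ∈ (tGT n lam).extremePoints ℝ) :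
    (∀ p, x.1 p ∈ AddSubgroup.closure (lam '' Set.Icc 1 n)) ∧
    (∀ p, x.2.1 p ∈ AddSubgroup.closure (lam '' Set.Icc 1 n)) ∧
    (∀ p, x.2.2.1 p ∈ AddSubgroup.closure (lam '' Set.Icc 1 n)) ∧
    (∀ p, x.2.2.2.1 p ∈ AddSubgroup.closure (lam '' Set.Icc 1 n)) ∧
    x.2.2.2.2 ∈ AddSubgroup.closure (lam '' Set.Icc 1 n) := by
  classical
  have hx1 : x ∈ tGT n lam := hx.1
  obtain ⟨ε, hε, hfeas⟩ := TGTmain.feas n lam x hx1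
  have hplus : x + ε • TGTmain.pert n lam x ∈ tGT n lam := hfeas ε (by rw [abs_of_pos hε])
  have hminus : x + (-ε) • TGTmain.pert n lam x ∈ tGT n lam :=
    hfeas (-ε) (by rw [abs_neg, abs_of_pos hε])
  have hseg : x ∈ openSegment ℝ (x + (-ε) • TGTmain.pert n lam x)
      (x + ε • TGTmain.pert n lam x) := by
    refine ⟨1/2, 1/2, by norm_num, by norm_num, by norm_num, ?_⟩
    module
  have heq : x + ε • TGTmain.pert n lam x = x := hx.2 hplus hminus (by rw [openSegment_symm]; exact hseg)
  have hsm : ε • TGTmain.pert n lam x = 0 := add_eq_left.1 heq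
  have hp0 : TGTmain.pert n lam x = 0 := (smul_eq_zero.1 hsm).resolve_left (ne_of_gt hε)
  have hY0 : ∀ i j : ℕ, TGTaux.dir (TGTmain.G0 n lam) (tY n lam x i j) = 0 := by
    intro i j
    have h := TGTmain.pertY n lam x i j
    rw [hp0] at h
    rw [← h]
    simp only [tY]
    split_ifs <;> simp
  have hYm : ∀ i j : ℕ, tY n lam x i j ∈ TGTmain.G0 n lam :=
    fun i j => TGTaux.mem_of_dir_eq_zero _ (hY0 i j)
  have hZm : ∀ i j : ℕ, tZ n x i j ∈ TGTmain.G0 n lam := by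
    intro i j
    have h := TGTmain.pertZ n lam x i j
    rw [hp0] at h
    apply TGTaux.mem_of_dir_eq_zero (TGTmain.G0 n lam)
    rw [← h]
    simp only [tZ]
    split_ifs <;> simp
  have hUD : ∀ i : ℕ, 1 ≤ i → i ≤ n - 2 →
      tU n x i ∈ TGTmain.G0 n lam ∧ tD n x i ∈ TGTmain.G0 n lam := by
    intro i hi1 hi2
    have hDU : TGTmain.DUv n lam x i = 0 := by
      have h := TGTmain.pertU n lam x (i := i) ⟨hi1, hi2⟩
      rw [hp0] at h
      rw [← h]
      simp only [tU]
      split_ifs <;> simp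
    have hDD : TGTmain.DDv n lam x i = 0 := by
      have h := TGTmain.pertD n lam x (i := i) ⟨hi1, hi2⟩
      rw [hp0] at h
      rw [← h]
      simp only [tD]
      split_ifs <;> simp
    have hE := hx1.1 i hi1 hi2
    have hpm : tY n lam x i (n-1) ∈ TGTmain.G0 n lam := hYm i (n-1)
    have hqm : tY n lam x (i+1) (n-1) ∈ TGTmain.G0 n lam := hYm (i+1) (n-1)
    by_cases hAct : TGTmain.ActD n lam x i
    · have hDW : TGTaux.dwJ (TGTmain.G0 n lam) (tD n x i)
          (tY n lam x i n) (tY n lam x (i+1) n) = 0 := by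
        have h := hDD
        simp only [TGTmain.DDv, if_pos hAct, TGTmain.DW] at h
        exact h
      have hDm : tD n x i ∈ TGTmain.G0 n lam :=
        TGTaux.junction_zero _ hDW (hY0 i n) (hY0 (i+1) n)
      refine ⟨?_, hDm⟩
      have he2 : tU n x i = tD n x i + (tY n lam x i (n-1) - tY n lam x (i+1) (n-1)) := by
        linarith [hE]
      rw [he2]
      exact add_mem hDm (sub_mem hpm hqm)
    · have hUW : TGTaux.dwJ (TGTmain.G0 n lam) (tU n x i)
          (tY n lam x i n) (tY n lam x (i+1) n) = 0 := by
        have h := hDU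
        simp only [TGTmain.DUv, if_neg hAct, TGTmain.DW] at h
        exact h
      have hUm : tU n x i ∈ TGTmain.G0 n lam :=
        TGTaux.junction_zero _ hUW (hY0 i n) (hY0 (i+1) n)
      refine ⟨hUm, ?_⟩
      have he2 : tD n x i = tU n x i - (tY n lam x i (n-1) - tY n lam x (i+1) (n-1)) := by
        linarith [hE]
      rw [he2]
      exact sub_mem hUm (sub_mem hpm hqm)
  have hLm : tL n x ∈ TGTmain.G0 n lam := by
    have hL0 : TGTaux.dwJ (TGTmain.G0 n lam) (tL n x)
        (tY n lam x (n-1) n) (tY n lam x n n) = 0 := by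
      have h : (TGTmain.pert n lam x).2.2.2.2 = (0 : TPt n).2.2.2.2 := by rw [hp0]
      exact h
    exact TGTaux.junction_zero _ hL0 (hY0 (n-1) n) (hY0 n n)
  refine ⟨?_, ?_, ?_, ?_, hLm⟩
  · rintro ⟨⟨i, j⟩, hp⟩
    have hb : tY n lam x i j = x.1 ⟨(i,j), hp⟩ := by
      simp only [tY]
      rw [if_neg (by rintro ⟨rfl, -⟩; omega), dif_pos hp]
    rw [← hb]
    exact hYm i j
  · rintro ⟨⟨i, j⟩, hp⟩
    have hb : tZ n x i j = x.2.1 ⟨(i,j), hp⟩ := by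
      simp only [tZ]
      rw [dif_pos hp]
    rw [← hb]
    exact hZm i j
  · rintro ⟨i, hp⟩
    have hb : tU n x i = x.2.2.1 ⟨i, hp⟩ := by
      simp only [tU]
      rw [dif_pos hp]
    rw [← hb]
    exact (hUD i hp.1 hp.2).1
  · rintro ⟨i, hp⟩
    have hb : tD n x i = x.2.2.2.1 ⟨i, hp⟩ := by
      simp only [tD]
      rw [dif_pos hp]
    rw [← hb]
    exact (hUD i hp.1 hp.2).2
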